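/- Let C ≥ 0 and suppose E ⊂ ℝ^{n+1} is a set of locally finite perimeter whose boundary T = ∂E is C-almost minimizing, i.e. for every bounded open W and every compactly supported integer multiplicity (n+1)-current X with support in W one has M_W(T) ≤ M_W(T + ∂X) + C·M_W(X). If moreover E is a vertical cylinder, E = E₀ × ℝ for a set E₀ ⊂ ℝⁿ of locally finite perimeter, then the boundary T₀ = ∂E₀ is C-almost minimizing in ℝⁿ. -/

import Mathlib

open MeasureTheory Set Filter Metric

/-- The (Euclidean) divergence of a vector field on `ℝⁿ`. -/
noncomputable def divg {n : ℕ} (φ : EuclideanSpace ℝ (Fin n) → EuclideanSpace ℝ (Fin n))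
    (x : EuclideanSpace ℝ (Fin n)) : ℝ :=
  ∑ i, fderiv ℝ φ x (EuclideanSpace.single i 1) i

/-- Admissible test vector fields for the variational definition of perimeter in `W`. -/
def TestField {n : ℕ} (W : Set (EuclideanSpace ℝ (Fin n)))
    (φ : EuclideanSpace ℝ (Fin n) → EuclideanSpace ℝ (Fin n)) : Prop :=
  ContDiff ℝ 1 φ ∧ HasCompactSupport φ ∧ tsupport φ ⊆ W ∧ ∀ x, ‖φ x‖ ≤ 1

/-- The perimeter (total variation of the characteristic function) of `E` in `W`,
defined variationally by the Gauss–Green supremum. -/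
noncomputable def Per {n : ℕ} (E W : Set (EuclideanSpace ℝ (Fin n))) : ℝ :=
  sSup {r : ℝ | ∃ φ, TestField W φ ∧ r = ∫ x in E, divg φ x}

/-- `E` has locally finite perimeter (is a Caccioppoli set). -/
def LocallyFinitePerimeter {n : ℕ} (E : Set (EuclideanSpace ℝ (Fin n))) : Prop :=
  ∀ W : Set (EuclideanSpace ℝ (Fin n)), IsOpen W → Bornology.IsBounded W →
    BddAbove {r : ℝ | ∃ φ, TestField W φ ∧ r = ∫ x in E, divg φ x}

/-- The boundary of `E` is `C`-almost minimizing: for every bounded open `W` and every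
competitor `F` with `E Δ F` compactly contained in `W`,
`Per(E; W) ≤ Per(F; W) + C·Leb(E Δ F)`. -/
def AlmostMinimizing {n : ℕ} (C : ℝ) (E : Set (EuclideanSpace ℝ (Fin n))) : Prop :=
  ∀ W : Set (EuclideanSpace ℝ (Fin n)), IsOpen W → Bornology.IsBounded W →
    ∀ F : Set (EuclideanSpace ℝ (Fin n)),
      (∃ K, IsCompact K ∧ symmDiff E F ⊆ K ∧ K ⊆ W) →
      Per E W ≤ Per F W + C * (volume (symmDiff E F)).toReal

noncomputable section

variable {n : ℕ}

abbrev Euc (n : ℕ) := EuclideanSpace ℝ (Fin n)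

/-- Linear splitting of `ℝ^{n+1}` into last coordinate and the rest. -/
noncomputable def splitL (n : ℕ) : Euc (n+1) ≃L[ℝ] ℝ × Euc n :=
  LinearEquiv.toContinuousLinearEquiv
  { toFun := fun x => (x (Fin.last n), WithLp.toLp 2 (fun i : Fin n => x i.castSucc))
    invFun := fun p => WithLp.toLp 2 (Fin.snoc p.2 p.1 : Fin (n+1) → ℝ)
    map_add' := by intro x y; rfl
    map_smul' := by intro c x; rfl
    left_inv := by
      intro x
      refine PiLp.ext fun j => ?_
      refine Fin.lastCases ?_ (fun i => ?_) j
      · simp [Fin.snoc_last]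
      · simp [Fin.snoc_castSucc]
    right_inv := by
      rintro ⟨t, y⟩
      refine Prod.ext ?_ (PiLp.ext fun i => ?_)
      · simp [Fin.snoc_last]
      · simp [Fin.snoc_castSucc] }

@[simp] lemma splitL_apply_fst (x : Euc (n+1)) : (splitL n x).1 = x (Fin.last n) := rfl
@[simp] lemma splitL_apply_snd (x : Euc (n+1)) (i : Fin n) : (splitL n x).2 i = x i.castSucc := rfl
@[simp] lemma splitL_symm_apply_last (p : ℝ × Euc n) :
    (splitL n).symm p (Fin.last n) = p.1 := by
  show (Fin.snoc p.2 p.1 : Fin (n+1) → ℝ) (Fin.last n) = p.1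
  simp [Fin.snoc_last]
@[simp] lemma splitL_symm_apply_castSucc (p : ℝ × Euc n) (i : Fin n) :
    (splitL n).symm p i.castSucc = p.2 i := by
  show (Fin.snoc p.2 p.1 : Fin (n+1) → ℝ) i.castSucc = p.2 i
  simp [Fin.snoc_castSucc]

/-- `splitL` as a measurable equivalence. -/
noncomputable def splitM (n : ℕ) : Euc (n+1) ≃ᵐ ℝ × Euc n :=
  (splitL n).toHomeomorph.toMeasurableEquiv

@[simp] lemma splitM_apply (x : Euc (n+1)) : splitM n x = splitL n x := rfl
@[simp] lemma splitM_symm_apply (p : ℝ × Euc n) : (splitM n).symm p = (splitL n).symm p := rfl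

lemma splitL_measurePreserving :
    MeasurePreserving (splitL n) (volume : Measure (Euc (n+1)))
      (volume : Measure (ℝ × Euc n)) := by
  have h1 := PiLp.volume_preserving_ofLp (Fin (n+1))
  have h2 := MeasureTheory.volume_preserving_piFinSuccAbove (fun _ : Fin (n+1) => ℝ) (Fin.last n)
  have h3 : MeasurePreserving
      (Prod.map (id : ℝ → ℝ) (@WithLp.toLp 2 (Fin n → ℝ)))
      (volume : Measure (ℝ × (Fin n → ℝ))) (volume : Measure (ℝ × Euc n)) :=
    (MeasurePreserving.id _).prod
      (PiLp.volume_preserving_toLp (Fin n))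
  have hcomp := (h3.comp h2).comp h1
  have : ((Prod.map (id : ℝ → ℝ) (@WithLp.toLp 2 (Fin n → ℝ))) ∘
      (⇑(MeasurableEquiv.piFinSuccAbove (fun _ : Fin (n+1) => ℝ) (Fin.last n)))) ∘
      (@WithLp.ofLp 2 (Fin (n+1) → ℝ)) = ⇑(splitL n) := by
    funext x
    refine Prod.ext rfl (PiLp.ext fun i => ?_)
    show x ((Fin.last n).succAbove i) = x i.castSucc
    rw [Fin.succAbove_last]
  rwa [this] at hcomp

lemma volume_preimage_split (S : Set (ℝ × Euc n)) :
    volume ((splitL n) ⁻¹' S) = volume S := by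
  have hmap : Measure.map (⇑(splitM n)) volume = volume := splitL_measurePreserving.map_eq
  calc volume ((splitL n) ⁻¹' S) = volume ((splitM n) ⁻¹' S) := rfl
    _ = Measure.map (⇑(splitM n)) volume S := (MeasurableEquiv.map_apply _ _).symm
    _ = volume S := by rw [hmap]

lemma map_restrict_split (S : Set (ℝ × Euc n)) :
    Measure.map (⇑(splitM n)) (volume.restrict ((splitL n) ⁻¹' S)) = volume.restrict S := by
  ext A hA
  rw [MeasurableEquiv.map_apply, Measure.restrict_apply hA,
    Measure.restrict_apply ((splitM n).measurable hA)]
  have : (⇑(splitM n) ⁻¹' A) ∩ ((splitL n) ⁻¹' S) = (splitL n) ⁻¹' (A ∩ S) := rfl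
  rw [this, volume_preimage_split]

lemma setIntegral_split (f : Euc (n+1) → ℝ) (S : Set (ℝ × Euc n)) :
    ∫ x in (splitL n) ⁻¹' S, f x = ∫ p in S, f ((splitL n).symm p) := by
  rw [← map_restrict_split, integral_map_equiv]
  refine integral_congr_ae (Eventually.of_forall fun x => ?_)
  congr 1
  exact ((splitL n).symm_apply_apply x).symm

/-! ### divergence basics -/

lemma divg_continuous {φ : Euc n → Euc n} (hφ : ContDiff ℝ 1 φ) : Continuous (divg φ) := by
  refine continuous_finset_sum _ fun i _ => ?_
  have h1 : Continuous (fderiv ℝ φ) := hφ.continuous_fderiv one_ne_zero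
  have h2 : Continuous fun x => (fderiv ℝ φ x) (EuclideanSpace.single i 1) :=
    h1.clm_apply continuous_const
  exact (EuclideanSpace.proj i).continuous.comp h2

lemma divg_support_subset (φ : Euc n → Euc n) :
    Function.support (divg φ) ⊆ tsupport φ := by
  intro x hx
  by_contra hxt
  have : fderiv ℝ φ x = 0 := by
    have : φ =ᶠ[nhds x] 0 := by
      have : (tsupport φ)ᶜ ∈ nhds x := (isClosed_tsupport φ).isOpen_compl.mem_nhds hxt
      filter_upwards [this] with y hy
      exact image_eq_zero_of_notMem_tsupport hy
    rw [Filter.EventuallyEq.fderiv_eq this]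
    exact fderiv_const_apply 0
  apply hx
  simp [divg, this]

lemma divg_hcs {φ : Euc n → Euc n} (hφ : HasCompactSupport φ) :
    HasCompactSupport (divg φ) :=
  HasCompactSupport.of_support_subset_isCompact hφ (divg_support_subset φ)

lemma divg_integrable {φ : Euc n → Euc n} (hφ : ContDiff ℝ 1 φ)
    (hcs : HasCompactSupport φ) (μ : Measure (Euc n)) (hμ : μ ≤ volume) :
    Integrable (divg φ) μ :=
  ((divg_continuous hφ).integrable_of_hasCompactSupport (divg_hcs hcs)).mono_measure hμ

lemma divg_neg (φ : Euc n → Euc n) : divg (-φ) = -divg φ := by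
  funext x
  simp only [divg, Pi.neg_apply]
  rw [← Finset.sum_neg_distrib]
  refine Finset.sum_congr rfl fun i _ => ?_
  have : fderiv ℝ (-φ) x = -fderiv ℝ φ x := by
    rw [show (-φ) = fun y => -φ y from rfl, fderiv_fun_neg]
  simp [this]

lemma testField_neg {W : Set (Euc n)} {φ : Euc n → Euc n} (h : TestField W φ) :
    TestField W (-φ) := by
  obtain ⟨h1, h2, h3, h4⟩ := h
  refine ⟨h1.neg, ?_, ?_, fun x => by simpa using h4 x⟩
  · simpa [HasCompactSupport, tsupport, Function.support_neg] using h2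
  · simpa [tsupport, Function.support_neg] using h3

lemma testField_zero (W : Set (Euc n)) : TestField W (0 : Euc n → Euc n) := by
  refine ⟨contDiff_const, ?_, ?_, fun x => by simp⟩
  · simp [HasCompactSupport, tsupport, Function.support_zero]
  · simp [tsupport, Function.support_zero]

lemma divg_zero : divg (0 : Euc n → Euc n) = 0 := by
  funext x
  have : fderiv ℝ (0 : Euc n → Euc n) x = 0 := fderiv_const_apply 0
  simp [divg, this]

lemma zero_mem_perSet (E W : Set (Euc n)) :
    (0:ℝ) ∈ {r : ℝ | ∃ φ, TestField W φ ∧ r = ∫ x in E, divg φ x} := by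
  refine ⟨0, testField_zero W, ?_⟩
  simp [divg_zero]

lemma Per_nonneg (E W : Set (Euc n)) : 0 ≤ Per E W := by
  by_cases h : BddAbove {r : ℝ | ∃ φ, TestField W φ ∧ r = ∫ x in E, divg φ x}
  · exact le_csSup h (zero_mem_perSet E W)
  · rw [Per, Real.sSup_of_not_bddAbove h]

/-! ### coordinate continuous linear maps -/

noncomputable def lastCLM (n : ℕ) : Euc (n+1) →L[ℝ] ℝ :=
  (ContinuousLinearMap.fst ℝ ℝ (Euc n)).comp (splitL n : Euc (n+1) →L[ℝ] ℝ × Euc n)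

noncomputable def projCLM (n : ℕ) : Euc (n+1) →L[ℝ] Euc n :=
  (ContinuousLinearMap.snd ℝ ℝ (Euc n)).comp (splitL n : Euc (n+1) →L[ℝ] ℝ × Euc n)

noncomputable def inclCLM (n : ℕ) : Euc n →L[ℝ] Euc (n+1) :=
  ((splitL n).symm : ℝ × Euc n →L[ℝ] Euc (n+1)).comp (ContinuousLinearMap.inr ℝ ℝ (Euc n))

@[simp] lemma lastCLM_apply (x : Euc (n+1)) : lastCLM n x = x (Fin.last n) := rfl
@[simp] lemma projCLM_apply (x : Euc (n+1)) (i : Fin n) : projCLM n x i = x i.castSucc := rfl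
@[simp] lemma inclCLM_apply (y : Euc n) : inclCLM n y = (splitL n).symm (0, y) := rfl

lemma inclCLM_apply_castSucc (y : Euc n) (i : Fin n) : inclCLM n y i.castSucc = y i := by
  simp
lemma inclCLM_apply_last (y : Euc n) : inclCLM n y (Fin.last n) = 0 := by
  simp

lemma castSucc_ne_last (i : Fin n) : i.castSucc ≠ Fin.last n :=
  ne_of_lt (Fin.castSucc_lt_last i)

lemma lastCLM_single (i : Fin n) : lastCLM n (EuclideanSpace.single i.castSucc 1) = 0 := by
  have : lastCLM n (EuclideanSpace.single i.castSucc 1)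
      = EuclideanSpace.single i.castSucc (1:ℝ) (Fin.last n) := rfl
  rw [this, EuclideanSpace.single_apply, if_neg (fun h => castSucc_ne_last i h.symm)]

lemma projCLM_single (i : Fin n) :
    projCLM n (EuclideanSpace.single i.castSucc 1) = EuclideanSpace.single i 1 := by
  refine PiLp.ext fun j => ?_
  simp only [projCLM_apply, EuclideanSpace.single_apply]
  by_cases h : j = i
  · simp [h]
  · rw [if_neg (fun hc => h (Fin.castSucc_injective n hc)), if_neg h]

lemma symm_single_castSucc (i : Fin n) :
    (splitL n).symm (0, EuclideanSpace.single i 1) = EuclideanSpace.single i.castSucc 1 := by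
  refine PiLp.ext fun j => ?_
  refine Fin.lastCases ?_ (fun k => ?_) j
  · rw [splitL_symm_apply_last, EuclideanSpace.single_apply,
      if_neg (fun h => castSucc_ne_last i h.symm)]
  · rw [splitL_symm_apply_castSucc]
    simp only [EuclideanSpace.single_apply]
    by_cases h : k = i
    · simp [h]
    · rw [if_neg h, if_neg (fun hc => h (Fin.castSucc_injective n hc))]

lemma symm_one_zero :
    (splitL n).symm (1, 0) = EuclideanSpace.single (Fin.last n) 1 := by
  refine PiLp.ext fun j => ?_
  refine Fin.lastCases ?_ (fun k => ?_) j
  · simp [EuclideanSpace.single_apply]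
  · rw [splitL_symm_apply_castSucc]
    simp [EuclideanSpace.single_apply, castSucc_ne_last k]

/-! ### norm lemmas -/

lemma norm_symm_zero (y : Euc n) : ‖(splitL n).symm (0, y)‖ = ‖y‖ := by
  rw [EuclideanSpace.norm_eq, EuclideanSpace.norm_eq]
  congr 1
  rw [Fin.sum_univ_castSucc]
  simp

lemma norm_projCLM_le (x : Euc (n+1)) : ‖projCLM n x‖ ≤ ‖x‖ := by
  rw [EuclideanSpace.norm_eq, EuclideanSpace.norm_eq]
  apply Real.sqrt_le_sqrt
  rw [Fin.sum_univ_castSucc]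
  simp only [projCLM_apply]
  have : (0:ℝ) ≤ ‖x (Fin.last n)‖ ^ 2 := sq_nonneg _
  linarith

lemma abs_coord_le_norm (x : Euc (n+1)) (j : Fin (n+1)) : |x j| ≤ ‖x‖ := by
  rw [EuclideanSpace.norm_eq]
  have h1 : |x j| = Real.sqrt (‖x j‖ ^ 2) := by
    rw [Real.sqrt_sq_eq_abs]
    simp
  rw [h1]
  apply Real.sqrt_le_sqrt
  exact Finset.single_le_sum (fun i _ => sq_nonneg ‖x i‖) (Finset.mem_univ j)

/-! ### compact support in fibers -/

lemma hcs_fiber {β : Type*} [TopologicalSpace β] [Zero β] {f : Euc (n+1) → β}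
    (hf : HasCompactSupport f) (t : ℝ) :
    HasCompactSupport (fun y : Euc n => f ((splitL n).symm (t, y))) := by
  set S := {y : Euc n | (splitL n).symm (t, y) ∈ tsupport f} with hS
  have hcont : Continuous fun y : Euc n => (splitL n).symm (t, y) :=
    (splitL n).symm.continuous.comp (Continuous.prodMk_right t)
  have hSclosed : IsClosed S := (isClosed_tsupport f).preimage hcont
  have hSsub : S ⊆ (fun x => (splitL n x).2) '' tsupport f := by
    intro y hy
    exact ⟨(splitL n).symm (t, y), hy, by simp⟩
  have hScomp : IsCompact S :=
    ((hf.image (continuous_snd.comp (splitL n).continuous)).of_isClosed_subset hSclosed hSsub)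
  apply HasCompactSupport.of_support_subset_isCompact hScomp
  intro y hy
  exact subset_tsupport f hy

/-! ### the lifted vector field -/

noncomputable def liftF (n : ℕ) (χ : ℝ → ℝ) (φ₀ : Euc n → Euc n) : Euc (n+1) → Euc (n+1) :=
  fun x => (splitL n).symm (0, χ (lastCLM n x) • φ₀ (projCLM n x))

lemma liftF_contDiff {χ : ℝ → ℝ} {φ₀ : Euc n → Euc n}
    (hχ : ContDiff ℝ 1 χ) (hφ₀ : ContDiff ℝ 1 φ₀) : ContDiff ℝ 1 (liftF n χ φ₀) := by
  apply ((splitL n).symm : ℝ × Euc n →L[ℝ] Euc (n+1)).contDiff.comp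
  exact contDiff_const.prodMk (((hχ.comp (lastCLM n).contDiff)).smul (hφ₀.comp (projCLM n).contDiff))

lemma liftF_hasFDerivAt {χ : ℝ → ℝ} {φ₀ : Euc n → Euc n}
    (hχ : ContDiff ℝ 1 χ) (hφ₀ : ContDiff ℝ 1 φ₀) (x : Euc (n+1)) :
    HasFDerivAt (liftF n χ φ₀)
      ((inclCLM n).comp
        (χ (lastCLM n x) • ((fderiv ℝ φ₀ (projCLM n x)).comp (projCLM n)) +
          ((fderiv ℝ χ (lastCLM n x)).comp (lastCLM n)).smulRight (φ₀ (projCLM n x)))) x := by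
  have hc : HasFDerivAt (fun x => χ (lastCLM n x))
      ((fderiv ℝ χ (lastCLM n x)).comp (lastCLM n)) x :=
    ((hχ.differentiable one_ne_zero _).hasFDerivAt).comp x (lastCLM n).hasFDerivAt
  have hf : HasFDerivAt (fun x => φ₀ (projCLM n x))
      ((fderiv ℝ φ₀ (projCLM n x)).comp (projCLM n)) x :=
    ((hφ₀.differentiable one_ne_zero _).hasFDerivAt).comp x (projCLM n).hasFDerivAt
  have hG := hc.smul hf
  exact (inclCLM n).hasFDerivAt.comp x hG

lemma liftF_divg {χ : ℝ → ℝ} {φ₀ : Euc n → Euc n}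
    (hχ : ContDiff ℝ 1 χ) (hφ₀ : ContDiff ℝ 1 φ₀) (x : Euc (n+1)) :
    divg (liftF n χ φ₀) x = χ (lastCLM n x) * divg φ₀ (projCLM n x) := by
  have hD := (liftF_hasFDerivAt hχ hφ₀ x).fderiv
  set t := lastCLM n x with ht
  set p := projCLM n x with hp
  set M := (χ t • ((fderiv ℝ φ₀ p).comp (projCLM n)) +
      ((fderiv ℝ χ t).comp (lastCLM n)).smulRight (φ₀ p)) with hM
  rw [divg]
  rw [hD, Fin.sum_univ_castSucc]
  have h1 : ∀ i : Fin n, ((inclCLM n).comp M) (EuclideanSpace.single i.castSucc 1) i.castSucc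
      = χ t * (fderiv ℝ φ₀ p (EuclideanSpace.single i 1)) i := by
    intro i
    rw [ContinuousLinearMap.comp_apply, inclCLM_apply_castSucc, hM,
      ContinuousLinearMap.add_apply, ContinuousLinearMap.smul_apply,
      ContinuousLinearMap.comp_apply, ContinuousLinearMap.smulRight_apply,
      ContinuousLinearMap.comp_apply, projCLM_single, lastCLM_single, map_zero, zero_smul,
      add_zero]
    rfl
  have h2 : ((inclCLM n).comp M) (EuclideanSpace.single (Fin.last n) 1) (Fin.last n) = 0 := by
    rw [ContinuousLinearMap.comp_apply]
    exact inclCLM_apply_last _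
  rw [h2, add_zero, divg, Finset.mul_sum]
  exact Finset.sum_congr rfl fun i _ => h1 i

/-! ### lifted field is a test field -/

lemma preSplit_eq_image (S : Set (ℝ × Euc n)) :
    (splitL n) ⁻¹' S = (splitL n).symm '' S := by
  ext x
  constructor
  · intro h
    exact ⟨splitL n x, h, by simp⟩
  · rintro ⟨p, hp, rfl⟩
    simpa using hp

lemma isBounded_preSplit {I : Set ℝ} {W : Set (Euc n)}
    (hI : Bornology.IsBounded I) (hW : Bornology.IsBounded W) :
    Bornology.IsBounded ((splitL n) ⁻¹' (I ×ˢ W)) := by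
  rw [preSplit_eq_image]
  exact ((splitL n).symm : ℝ × Euc n →L[ℝ] Euc (n+1)).lipschitz.isBounded_image (hI.prod hW)

lemma isOpen_preSplit {I : Set ℝ} {W : Set (Euc n)} (hI : IsOpen I) (hW : IsOpen W) :
    IsOpen ((splitL n) ⁻¹' (I ×ˢ W)) :=
  (hI.prod hW).preimage (splitL n).continuous

lemma isCompact_preSplit {I : Set ℝ} {W : Set (Euc n)} (hI : IsCompact I) (hW : IsCompact W) :
    IsCompact ((splitL n) ⁻¹' (I ×ˢ W)) :=
  ((splitL n).toHomeomorph.isCompact_preimage).2 (hI.prod hW)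

lemma liftF_testField {χ : ℝ → ℝ} {φ₀ : Euc n → Euc n} {I : Set ℝ} {W : Set (Euc n)}
    (hχ : ContDiff ℝ 1 χ) (hχs : HasCompactSupport χ) (hχI : tsupport χ ⊆ I)
    (hχ1 : ∀ t, |χ t| ≤ 1) (hφ : TestField W φ₀) :
    TestField ((splitL n) ⁻¹' (I ×ˢ W)) (liftF n χ φ₀) := by
  obtain ⟨h1, h2, h3, h4⟩ := hφ
  set S := (splitL n) ⁻¹' ((tsupport χ) ×ˢ (tsupport φ₀)) with hS
  have hsub : Function.support (liftF n χ φ₀) ⊆ S := by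
    intro x hx
    simp only [Function.mem_support] at hx
    have hz : χ (lastCLM n x) • φ₀ (projCLM n x) ≠ 0 := by
      intro h
      apply hx
      unfold liftF
      rw [h]
      exact map_zero ((splitL n).symm : ℝ × Euc n →L[ℝ] Euc (n+1))
    have hχ0 : χ (lastCLM n x) ≠ 0 := fun h => hz (by rw [h, zero_smul])
    have hφ0 : φ₀ (projCLM n x) ≠ 0 := fun h => hz (by rw [h, smul_zero])
    exact ⟨subset_tsupport χ hχ0, subset_tsupport φ₀ hφ0⟩
  have hSclosed : IsClosed S :=
    ((isClosed_tsupport χ).prod (isClosed_tsupport φ₀)).preimage (splitL n).continuous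
  have hScomp : IsCompact S := isCompact_preSplit hχs h2
  refine ⟨liftF_contDiff hχ h1, ?_, ?_, ?_⟩
  · exact HasCompactSupport.of_support_subset_isCompact hScomp hsub
  · refine (closure_minimal hsub hSclosed).trans ?_
    exact Set.preimage_mono (Set.prod_mono hχI h3)
  · intro x
    unfold liftF
    rw [norm_symm_zero, norm_smul, Real.norm_eq_abs]
    exact mul_le_one₀ (hχ1 _) (norm_nonneg _) (h4 _)

lemma liftF_integral {χ : ℝ → ℝ} {φ₀ : Euc n → Euc n}
    (hχ : ContDiff ℝ 1 χ) (hφ₀ : ContDiff ℝ 1 φ₀) (J : Set ℝ) (A₀ : Set (Euc n)) :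
    ∫ x in (splitL n) ⁻¹' (J ×ˢ A₀), divg (liftF n χ φ₀) x
      = (∫ t in J, χ t) * ∫ y in A₀, divg φ₀ y := by
  rw [setIntegral_split]
  have hpt : ∀ p : ℝ × Euc n, divg (liftF n χ φ₀) ((splitL n).symm p) = χ p.1 * divg φ₀ p.2 := by
    intro p
    rw [liftF_divg hχ hφ₀]
    have e1 : lastCLM n ((splitL n).symm p) = p.1 := by simp
    have e2 : projCLM n ((splitL n).symm p) = p.2 := by
      refine PiLp.ext fun i => ?_
      simp
    rw [e1, e2]
  rw [integral_congr_ae (Eventually.of_forall hpt)]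
  rw [Measure.volume_eq_prod, ← Measure.prod_restrict]
  exact integral_prod_mul (fun t => χ t) (fun y => divg φ₀ y)

/-! ### slicing -/

noncomputable def sliceF (n : ℕ) (φ : Euc (n+1) → Euc (n+1)) (t : ℝ) : Euc n → Euc n :=
  fun y => projCLM n (φ ((splitL n).symm (t, y)))

noncomputable def dlast (n : ℕ) (φ : Euc (n+1) → Euc (n+1)) : Euc (n+1) → ℝ :=
  fun x => fderiv ℝ φ x (EuclideanSpace.single (Fin.last n) 1) (Fin.last n)

lemma fderiv_zero_outside {φ : Euc (n+1) → Euc (n+1)} {x : Euc (n+1)}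
    (hx : x ∉ tsupport φ) : fderiv ℝ φ x = 0 := by
  have : φ =ᶠ[nhds x] 0 := by
    filter_upwards [(isClosed_tsupport φ).isOpen_compl.mem_nhds hx] with y hy
    exact image_eq_zero_of_notMem_tsupport hy
  rw [Filter.EventuallyEq.fderiv_eq this]
  exact fderiv_const_apply 0

lemma divg_zero_outside {φ : Euc (n+1) → Euc (n+1)} {x : Euc (n+1)}
    (hx : x ∉ tsupport φ) : divg φ x = 0 := by
  simp [divg, fderiv_zero_outside hx]

lemma dlast_zero_outside {φ : Euc (n+1) → Euc (n+1)} {x : Euc (n+1)}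
    (hx : x ∉ tsupport φ) : dlast n φ x = 0 := by
  simp [dlast, fderiv_zero_outside hx]

lemma sliceF_contDiff {φ : Euc (n+1) → Euc (n+1)} (hφ : ContDiff ℝ 1 φ) (t : ℝ) :
    ContDiff ℝ 1 (sliceF n φ t) := by
  apply (projCLM n).contDiff.comp
  apply hφ.comp
  exact ((splitL n).symm : ℝ × Euc n →L[ℝ] Euc (n+1)).contDiff.comp
    (contDiff_const.prodMk contDiff_id)

lemma sliceF_hasFDerivAt {φ : Euc (n+1) → Euc (n+1)} (hφ : ContDiff ℝ 1 φ) (t : ℝ) (y : Euc n) :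
    HasFDerivAt (sliceF n φ t)
      ((projCLM n).comp ((fderiv ℝ φ ((splitL n).symm (t, y))).comp
        (((splitL n).symm : ℝ × Euc n →L[ℝ] Euc (n+1)).comp
          ((0 : Euc n →L[ℝ] ℝ).prod (ContinuousLinearMap.id ℝ (Euc n)))))) y := by
  have h0 : HasFDerivAt (fun y' : Euc n => ((t, y') : ℝ × Euc n))
      ((0 : Euc n →L[ℝ] ℝ).prod (ContinuousLinearMap.id ℝ (Euc n))) y :=
    (hasFDerivAt_const t y).prodMk (hasFDerivAt_id y)
  have h1 := (((splitL n).symm : ℝ × Euc n →L[ℝ] Euc (n+1)).hasFDerivAt).comp y h0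
  have h2 := ((hφ.differentiable one_ne_zero _).hasFDerivAt).comp y h1
  exact (projCLM n).hasFDerivAt.comp y h2

lemma divg_sliceF {φ : Euc (n+1) → Euc (n+1)} (hφ : ContDiff ℝ 1 φ) (t : ℝ) (y : Euc n) :
    divg (sliceF n φ t) y = ∑ i : Fin n,
      (fderiv ℝ φ ((splitL n).symm (t, y)) (EuclideanSpace.single i.castSucc 1)) i.castSucc := by
  rw [divg, (sliceF_hasFDerivAt hφ t y).fderiv]
  refine Finset.sum_congr rfl fun i _ => ?_
  have e0 : ((0 : Euc n →L[ℝ] ℝ).prod (ContinuousLinearMap.id ℝ (Euc n)))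
      (EuclideanSpace.single i 1) = ((0 : ℝ), EuclideanSpace.single i (1:ℝ)) := by
    simp
  rw [ContinuousLinearMap.comp_apply, ContinuousLinearMap.comp_apply,
    ContinuousLinearMap.comp_apply, e0]
  have e1 : ((splitL n).symm : ℝ × Euc n →L[ℝ] Euc (n+1)) ((0:ℝ), EuclideanSpace.single i (1:ℝ))
      = EuclideanSpace.single i.castSucc 1 := symm_single_castSucc i
  rw [e1]
  rfl

lemma divg_decomp {φ : Euc (n+1) → Euc (n+1)} (hφ : ContDiff ℝ 1 φ) (t : ℝ) (y : Euc n) :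
    divg φ ((splitL n).symm (t, y))
      = divg (sliceF n φ t) y + dlast n φ ((splitL n).symm (t, y)) := by
  rw [divg, Fin.sum_univ_castSucc, divg_sliceF hφ t y]
  rfl

lemma sliceF_testField {φ : Euc (n+1) → Euc (n+1)} {I : Set ℝ} {W : Set (Euc n)}
    (hφ : TestField ((splitL n) ⁻¹' (I ×ˢ W)) φ) (t : ℝ) :
    TestField W (sliceF n φ t) := by
  obtain ⟨h1, h2, h3, h4⟩ := hφ
  have hsub : Function.support (sliceF n φ t) ⊆
      {y : Euc n | (splitL n).symm (t, y) ∈ tsupport φ} := by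
    intro y hy
    simp only [Function.mem_support] at hy
    have : φ ((splitL n).symm (t, y)) ≠ 0 := by
      intro h
      apply hy
      unfold sliceF
      rw [h, map_zero]
    exact subset_tsupport φ this
  have hclosed : IsClosed {y : Euc n | (splitL n).symm (t, y) ∈ tsupport φ} :=
    (isClosed_tsupport φ).preimage ((splitL n).symm.continuous.comp (Continuous.prodMk_right t))
  refine ⟨sliceF_contDiff h1 t, ?_, ?_, ?_⟩
  · have : HasCompactSupport (fun y : Euc n => ((projCLM n) ∘ φ) ((splitL n).symm (t, y))) :=
      hcs_fiber (h2.comp_left (map_zero (projCLM n))) t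
    exact this
  · refine (closure_minimal hsub hclosed).trans ?_
    intro y hy
    have := h3 hy
    have h5 : splitL n ((splitL n).symm (t, y)) ∈ I ×ˢ W := this
    rw [(splitL n).apply_symm_apply] at h5
    exact h5.2
  · intro y
    exact (norm_projCLM_le _).trans (h4 _)

lemma dlast_hasDerivAt {φ : Euc (n+1) → Euc (n+1)} (hφ : ContDiff ℝ 1 φ) (y : Euc n) (t : ℝ) :
    HasDerivAt (fun s => φ ((splitL n).symm (s, y)) (Fin.last n))
      (dlast n φ ((splitL n).symm (t, y))) t := by
  have h0 : HasDerivAt (fun s : ℝ => ((s, y) : ℝ × Euc n)) ((1:ℝ), (0 : Euc n)) t :=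
    (hasDerivAt_id t).prodMk (hasDerivAt_const t y)
  have h1 : HasDerivAt (fun s : ℝ => (splitL n).symm (s, y))
      (EuclideanSpace.single (Fin.last n) 1) t := by
    have := (((splitL n).symm : ℝ × Euc n →L[ℝ] Euc (n+1)).hasFDerivAt).comp_hasDerivAt t h0
    rw [show ((splitL n).symm : ℝ × Euc n →L[ℝ] Euc (n+1)) ((1:ℝ), (0 : Euc n))
      = EuclideanSpace.single (Fin.last n) 1 from symm_one_zero] at this
    exact this
  have h2 := ((hφ.differentiable one_ne_zero _).hasFDerivAt).comp_hasDerivAt t h1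
  have h3 := ((EuclideanSpace.proj (Fin.last n) : Euc (n+1) →L[ℝ] ℝ).hasFDerivAt).comp_hasDerivAt
    t h2
  exact h3

lemma dlast_continuous {φ : Euc (n+1) → Euc (n+1)} (hφ : ContDiff ℝ 1 φ) :
    Continuous (dlast n φ) := by
  have h1 : Continuous (fderiv ℝ φ) := hφ.continuous_fderiv one_ne_zero
  exact (EuclideanSpace.proj (Fin.last n)).continuous.comp (h1.clm_apply continuous_const)

lemma dlast_hcs {φ : Euc (n+1) → Euc (n+1)} (hφ : HasCompactSupport φ) :
    HasCompactSupport (dlast n φ) := by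
  apply HasCompactSupport.of_support_subset_isCompact hφ
  intro x hx
  by_contra h
  exact hx (dlast_zero_outside h)

/-! ### bump functions -/

lemma bump_exists (r R : ℝ) (hr : 0 < r) (hrR : r < R) :
    ∃ χ : ℝ → ℝ, ContDiff ℝ 1 χ ∧ HasCompactSupport χ ∧ tsupport χ ⊆ Ioo (-R) R ∧
      (∀ t, |χ t| ≤ 1) ∧ 2 * r ≤ ∫ t, χ t := by
  have hmid : r < (r + R) / 2 := by linarith
  have hmidR : (r + R) / 2 < R := by linarith
  let f : ContDiffBump (0 : ℝ) := ⟨r, (r + R)/2, hr, hmid⟩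
  refine ⟨f, f.contDiff.of_le (by exact_mod_cast le_top), f.hasCompactSupport, ?_, ?_, ?_⟩
  · rw [f.tsupport_eq]
    intro t ht
    simp only [Metric.mem_closedBall, Real.dist_eq, sub_zero] at ht
    have h1 : |t| < R := lt_of_le_of_lt ht hmidR
    rw [abs_lt] at h1
    exact ⟨h1.1, h1.2⟩
  · intro t
    rw [abs_of_nonneg f.nonneg]
    exact f.le_one
  · have hint : Integrable f volume := f.integrable
    have h1 : ∫ t in Metric.closedBall (0:ℝ) r, f t ≤ ∫ t, f t :=
      setIntegral_le_integral hint (Eventually.of_forall fun t => f.nonneg)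
    have h2 : ∫ t in Metric.closedBall (0:ℝ) r, f t
        = ∫ t in Metric.closedBall (0:ℝ) r, (1:ℝ) := by
      refine setIntegral_congr_fun measurableSet_closedBall fun t ht => ?_
      exact f.one_of_mem_closedBall ht
    have h3 : ∫ t in Metric.closedBall (0:ℝ) r, (1:ℝ)
        = (volume (Metric.closedBall (0:ℝ) r)).toReal := by
      rw [setIntegral_const, smul_eq_mul, mul_one]
      rfl
    have h4 : (volume (Metric.closedBall (0:ℝ) r)).toReal = 2 * r := by
      rw [Real.volume_closedBall, ENNReal.toReal_ofReal (by linarith)]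
    linarith [h1, h2 ▸ h3 ▸ h4]

/-! ### cylinder set identities -/

lemma symmDiff_cyl (E₀ F₀ : Set (Euc n)) (L : ℝ) :
    symmDiff ((univ : Set ℝ) ×ˢ E₀) ((Ioo (-L) L ×ˢ F₀) ∪ ((Ioo (-L) L)ᶜ ×ˢ E₀))
      = Ioo (-L) L ×ˢ (symmDiff E₀ F₀) := by
  ext ⟨t, y⟩
  simp only [Set.mem_symmDiff, Set.mem_prod, Set.mem_union, Set.mem_compl_iff, Set.mem_univ,
    true_and]
  by_cases ht : t ∈ Ioo (-L) L <;> simp [ht] <;> tauto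

lemma inter_cyl (E₀ F₀ : Set (Euc n)) (L : ℝ) :
    (Ioo (-L) L ×ˢ (univ : Set (Euc n))) ∩ ((Ioo (-L) L ×ˢ F₀) ∪ ((Ioo (-L) L)ᶜ ×ˢ E₀))
      = Ioo (-L) L ×ˢ F₀ := by
  ext ⟨t, y⟩
  simp only [Set.mem_inter_iff, Set.mem_prod, Set.mem_union, Set.mem_compl_iff, Set.mem_univ,
    and_true]
  tauto

lemma compl_inter_cyl (E₀ F₀ : Set (Euc n)) (L : ℝ) :
    (Ioo (-L) L ×ˢ (univ : Set (Euc n)))ᶜ ∩ ((Ioo (-L) L ×ˢ F₀) ∪ ((Ioo (-L) L)ᶜ ×ˢ E₀))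
      = (Ioo (-L) L)ᶜ ×ˢ E₀ := by
  ext ⟨t, y⟩
  simp only [Set.mem_inter_iff, Set.mem_compl_iff, Set.mem_prod, Set.mem_union, Set.mem_univ,
    and_true]
  tauto

/-! ### more helpers -/

lemma testField_mono {W₁ W₂ : Set (Euc n)} (h : W₁ ⊆ W₂) {φ : Euc n → Euc n}
    (hφ : TestField W₁ φ) : TestField W₂ φ :=
  ⟨hφ.1, hφ.2.1, hφ.2.2.1.trans h, hφ.2.2.2⟩

lemma comp_symm_integrable {f : Euc (n+1) → ℝ} (hf : Continuous f) (hcs : HasCompactSupport f)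
    (μ : Measure (ℝ × Euc n)) (hμ : μ ≤ volume) :
    Integrable (fun p : ℝ × Euc n => f ((splitL n).symm p)) μ := by
  have h1 : Continuous fun p : ℝ × Euc n => f ((splitL n).symm p) :=
    hf.comp (splitL n).symm.continuous
  have h2 : HasCompactSupport fun p : ℝ × Euc n => f ((splitL n).symm p) :=
    hcs.comp_homeomorph (splitL n).toHomeomorph.symm
  exact (h1.integrable_of_hasCompactSupport h2).mono_measure hμ

lemma hcs_fiber_t {β : Type*} [TopologicalSpace β] [Zero β] {f : Euc (n+1) → β}
    (hf : HasCompactSupport f) (y : Euc n) :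
    HasCompactSupport (fun t : ℝ => f ((splitL n).symm (t, y))) := by
  set S := {t : ℝ | (splitL n).symm (t, y) ∈ tsupport f} with hS
  have hcont : Continuous fun t : ℝ => (splitL n).symm (t, y) :=
    (splitL n).symm.continuous.comp (continuous_id.prodMk continuous_const)
  have hSclosed : IsClosed S := (isClosed_tsupport f).preimage hcont
  have hSsub : S ⊆ (fun x => (splitL n x).1) '' tsupport f := by
    intro t ht
    exact ⟨(splitL n).symm (t, y), ht, by simp⟩
  have hScomp : IsCompact S :=
    ((hf.image (continuous_fst.comp (splitL n).continuous)).of_isClosed_subset hSclosed hSsub)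
  apply HasCompactSupport.of_support_subset_isCompact hScomp
  intro t ht
  exact subset_tsupport f ht

/-- Restrict an integral to a measurable set outside which the integrand vanishes. -/
lemma setIntegral_eq_inter {α : Type*} [MeasurableSpace α] {f : α → ℝ} {A S : Set α}
    (hS : MeasurableSet S) (μ : Measure α) (hf : Integrable f (μ.restrict A))
    (h0 : ∀ x ∉ S, f x = 0) :
    ∫ x in A, f x ∂μ = ∫ x, f x ∂(μ.restrict (S ∩ A)) := by
  have hsplit := integral_add_compl hS hf
  have hzero : ∫ x in Sᶜ, f x ∂(μ.restrict A) = 0 := by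
    apply integral_eq_zero_of_ae
    have h1 : f =ᵐ[μ.restrict Sᶜ] 0 := by
      filter_upwards [ae_restrict_mem hS.compl] with x hx
      exact h0 x hx
    have h2 : (μ.restrict A).restrict Sᶜ ≤ μ.restrict Sᶜ := by
      rw [Measure.restrict_restrict hS.compl]
      exact Measure.restrict_mono Set.inter_subset_left le_rfl
    exact h1.filter_mono (ae_mono h2)
  rw [← hsplit, hzero, add_zero, Measure.restrict_restrict hS]

lemma setIntegral_tsupport_subset {χ : ℝ → ℝ} {I : Set ℝ} (h : tsupport χ ⊆ I) :
    ∫ t in I, χ t = ∫ t, χ t := by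
  apply setIntegral_eq_integral_of_forall_compl_eq_zero
  intro t ht
  exact image_eq_zero_of_notMem_tsupport fun hc => ht (h hc)

/-! ### lower bound -/

lemma lower_bound {E₀ W : Set (Euc n)}
    (hE₀b : BddAbove {r : ℝ | ∃ φ, TestField W φ ∧ r = ∫ x in E₀, divg φ x})
    (L δ : ℝ) (hL : 1 ≤ L) (hδ : 0 < δ)
    (hEb : BddAbove {r : ℝ | ∃ φ, TestField ((splitL n) ⁻¹' (Ioo (-(L+1)) (L+1) ×ˢ W)) φ ∧
      r = ∫ x in (splitL n) ⁻¹' ((univ : Set ℝ) ×ˢ E₀), divg φ x}) :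
    2 * L * (Per E₀ W - δ)
      ≤ Per ((splitL n) ⁻¹' ((univ : Set ℝ) ×ˢ E₀)) ((splitL n) ⁻¹' (Ioo (-(L+1)) (L+1) ×ˢ W)) := by
  have hL0 : (0:ℝ) < L := by linarith
  rcases le_or_gt (Per E₀ W - δ) 0 with hc | hc
  · have := Per_nonneg ((splitL n) ⁻¹' ((univ : Set ℝ) ×ˢ E₀))
      ((splitL n) ⁻¹' (Ioo (-(L+1)) (L+1) ×ˢ W))
    nlinarith
  · obtain ⟨χ, hχ1, hχ2, hχ3, hχ4, hχ5⟩ := bump_exists L (L+1) hL0 (by linarith)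
    obtain ⟨r, hrmem, hrgt⟩ :=
      exists_lt_of_lt_csSup ⟨0, zero_mem_perSet E₀ W⟩
        (show Per E₀ W - δ < sSup {r : ℝ | ∃ φ, TestField W φ ∧ r = ∫ x in E₀, divg φ x} by
          rw [show sSup {r : ℝ | ∃ φ, TestField W φ ∧ r = ∫ x in E₀, divg φ x} = Per E₀ W from rfl]
          linarith)
    obtain ⟨φ₀, hφ₀, hreq⟩ := hrmem
    have hr0 : 0 < r := lt_trans hc hrgt
    have hΦT : TestField ((splitL n) ⁻¹' (Ioo (-(L+1)) (L+1) ×ˢ W)) (liftF n χ φ₀) :=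
      liftF_testField hχ1 hχ2 hχ3 hχ4 hφ₀
    have hint : ∫ x in (splitL n) ⁻¹' ((univ : Set ℝ) ×ˢ E₀), divg (liftF n χ φ₀) x
        = (∫ t, χ t) * r := by
      rw [liftF_integral hχ1 hφ₀.1 univ E₀, Measure.restrict_univ, ← hreq]
    have hmem : (∫ t, χ t) * r ∈ {r : ℝ | ∃ φ,
        TestField ((splitL n) ⁻¹' (Ioo (-(L+1)) (L+1) ×ˢ W)) φ ∧
        r = ∫ x in (splitL n) ⁻¹' ((univ : Set ℝ) ×ˢ E₀), divg φ x} :=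
      ⟨liftF n χ φ₀, hΦT, hint.symm⟩
    have hle := le_csSup hEb hmem
    have : 2 * L * (Per E₀ W - δ) ≤ (∫ t, χ t) * r := by nlinarith
    exact this.trans hle

/-! ### unbounded transfer -/

lemma unbounded_transfer {E₀ F₀ W : Set (Euc n)}
    (hnb : ¬ BddAbove {r : ℝ | ∃ φ, TestField W φ ∧ r = ∫ x in F₀, divg φ x})
    (L : ℝ) (hL : 1 ≤ L) :
    ¬ BddAbove {r : ℝ | ∃ φ, TestField ((splitL n) ⁻¹' (Ioo (-(L+1)) (L+1) ×ˢ W)) φ ∧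
      r = ∫ x in (splitL n) ⁻¹' ((Ioo (-L) L ×ˢ F₀) ∪ ((Ioo (-L) L)ᶜ ×ˢ E₀)), divg φ x} := by
  intro hb
  obtain ⟨M, hM⟩ := hb
  obtain ⟨χ, hχ1, hχ2, hχ3, hχ4, hχ5⟩ := bump_exists (L/2) L (by linarith) (by linarith)
  have hc1 : (1:ℝ) ≤ ∫ t, χ t := by linarith
  -- get a large element of the F₀ set
  have : ∃ r ∈ {r : ℝ | ∃ φ, TestField W φ ∧ r = ∫ x in F₀, divg φ x}, max 0 M < r := by
    by_contra h
    push_neg at h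
    exact hnb ⟨max 0 M, fun r hr => h r hr⟩
  obtain ⟨r, ⟨φ₀, hφ₀, hreq⟩, hrgt⟩ := this
  have hr0 : 0 < r := lt_of_le_of_lt (le_max_left 0 M) hrgt
  have hΦT : TestField ((splitL n) ⁻¹' (Ioo (-(L+1)) (L+1) ×ˢ W)) (liftF n χ φ₀) := by
    refine testField_mono ?_ (liftF_testField hχ1 hχ2 hχ3 hχ4 hφ₀)
    apply Set.preimage_mono
    apply Set.prod_mono_left
    exact Ioo_subset_Ioo (by linarith) (by linarith)
  have hvanish : ∀ x ∉ (splitL n) ⁻¹' (Ioo (-L) L ×ˢ (univ : Set (Euc n))),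
      divg (liftF n χ φ₀) x = 0 := by
    intro x hx
    rw [liftF_divg hχ1 hφ₀.1]
    have : lastCLM n x ∉ Ioo (-L) L := by
      intro h
      exact hx ⟨h, Set.mem_univ _⟩
    rw [image_eq_zero_of_notMem_tsupport fun hc => this (hχ3 hc), zero_mul]
  have hIntegr : Integrable (divg (liftF n χ φ₀))
      (volume.restrict ((splitL n) ⁻¹' ((Ioo (-L) L ×ˢ F₀) ∪ ((Ioo (-L) L)ᶜ ×ˢ E₀)))) :=
    divg_integrable (liftF_contDiff hχ1 hφ₀.1) hΦT.2.1 _ Measure.restrict_le_self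
  have hmeasS : MeasurableSet ((splitL n) ⁻¹' (Ioo (-L) L ×ˢ (univ : Set (Euc n)))) :=
    (measurableSet_Ioo.prod MeasurableSet.univ).preimage (splitL n).continuous.measurable
  have hint : ∫ x in (splitL n) ⁻¹' ((Ioo (-L) L ×ˢ F₀) ∪ ((Ioo (-L) L)ᶜ ×ˢ E₀)),
      divg (liftF n χ φ₀) x = (∫ t, χ t) * r := by
    rw [setIntegral_eq_inter hmeasS volume hIntegr hvanish]
    have heq : (splitL n) ⁻¹' (Ioo (-L) L ×ˢ (univ : Set (Euc n))) ∩
        (splitL n) ⁻¹' ((Ioo (-L) L ×ˢ F₀) ∪ ((Ioo (-L) L)ᶜ ×ˢ E₀))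
        = (splitL n) ⁻¹' (Ioo (-L) L ×ˢ F₀) := by
      rw [← Set.preimage_inter, inter_cyl]
    rw [heq]
    rw [show ∫ x, divg (liftF n χ φ₀) x ∂(volume.restrict ((splitL n) ⁻¹' (Ioo (-L) L ×ˢ F₀)))
      = ∫ x in (splitL n) ⁻¹' (Ioo (-L) L ×ˢ F₀), divg (liftF n χ φ₀) x from rfl]
    rw [liftF_integral hχ1 hφ₀.1 (Ioo (-L) L) F₀, setIntegral_tsupport_subset hχ3, ← hreq]
  have hmem : (∫ t, χ t) * r ∈ {r : ℝ | ∃ φ,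
      TestField ((splitL n) ⁻¹' (Ioo (-(L+1)) (L+1) ×ˢ W)) φ ∧
      r = ∫ x in (splitL n) ⁻¹' ((Ioo (-L) L ×ˢ F₀) ∪ ((Ioo (-L) L)ᶜ ×ˢ E₀)), divg φ x} :=
    ⟨liftF n χ φ₀, hΦT, hint.symm⟩
  have := hM hmem
  have hMr : M < r := lt_of_le_of_lt (le_max_right 0 M) hrgt
  nlinarith

/-! ### the vertical (normal) part -/

section Vertical

variable {φ : Euc (n+1) → Euc (n+1)} {L : ℝ} {W : Set (Euc n)}

/-- The "cap difference" function. -/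
noncomputable def capD (n : ℕ) (φ : Euc (n+1) → Euc (n+1)) (L : ℝ) : Euc n → ℝ :=
  fun y => φ ((splitL n).symm (L, y)) (Fin.last n) - φ ((splitL n).symm (-L, y)) (Fin.last n)

lemma G2_cont (hφ1 : ContDiff ℝ 1 φ) (y : Euc n) :
    Continuous fun t : ℝ => dlast n φ ((splitL n).symm (t, y)) :=
  (dlast_continuous hφ1).comp ((splitL n).symm.continuous.comp
    (continuous_id.prodMk continuous_const))

lemma G2_integrable_t (hφ1 : ContDiff ℝ 1 φ) (hφ2 : HasCompactSupport φ) (y : Euc n) :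
    Integrable (fun t : ℝ => dlast n φ ((splitL n).symm (t, y))) volume :=
  (G2_cont hφ1 y).integrable_of_hasCompactSupport (hcs_fiber_t (dlast_hcs hφ2) y)

lemma ftc_Ioo (hφ1 : ContDiff ℝ 1 φ) (hLL : - L ≤ L) (y : Euc n) :
    ∫ t in Ioo (-L) L, dlast n φ ((splitL n).symm (t, y)) = capD n φ L y := by
  rw [← integral_Ioc_eq_integral_Ioo, ← intervalIntegral.integral_of_le hLL]
  exact intervalIntegral.integral_eq_sub_of_hasDerivAt
    (fun s _ => dlast_hasDerivAt hφ1 y s) ((G2_cont hφ1 y).intervalIntegrable _ _)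

lemma vanish_outer (hφ3 : tsupport φ ⊆ (splitL n) ⁻¹' (Ioo (-(L+1)) (L+1) ×ˢ W))
    {t : ℝ} (ht : t ∉ Ioo (-(L+1)) (L+1)) (y : Euc n) :
    (splitL n).symm (t, y) ∉ tsupport φ := by
  intro hmem
  have := hφ3 hmem
  have h2 : splitL n ((splitL n).symm (t, y)) ∈ Ioo (-(L+1)) (L+1) ×ˢ W := this
  rw [(splitL n).apply_symm_apply] at h2
  exact ht h2.1

lemma ftc_total (hφ1 : ContDiff ℝ 1 φ) (hφ2 : HasCompactSupport φ)
    (hφ3 : tsupport φ ⊆ (splitL n) ⁻¹' (Ioo (-(L+1)) (L+1) ×ˢ W)) (hL : (0:ℝ) ≤ L)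
    (y : Euc n) :
    ∫ t, dlast n φ ((splitL n).symm (t, y)) = 0 := by
  have hvan : ∀ t ∉ Ioo (-(L+1)) (L+1), dlast n φ ((splitL n).symm (t, y)) = 0 := fun t ht =>
    dlast_zero_outside (vanish_outer hφ3 ht y)
  rw [← setIntegral_eq_integral_of_forall_compl_eq_zero hvan]
  rw [ftc_Ioo hφ1 (by linarith) y]
  have hz : ∀ s : ℝ, s ∉ Ioo (-(L+1)) (L+1) →
      φ ((splitL n).symm (s, y)) (Fin.last n) = 0 := by
    intro s hs
    rw [image_eq_zero_of_notMem_tsupport (vanish_outer hφ3 hs y)]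
    rfl
  rw [capD, hz (L+1) (by simp), hz (-(L+1)) (by simp), sub_zero]

lemma ftc_compl (hφ1 : ContDiff ℝ 1 φ) (hφ2 : HasCompactSupport φ)
    (hφ3 : tsupport φ ⊆ (splitL n) ⁻¹' (Ioo (-(L+1)) (L+1) ×ˢ W)) (hL : (0:ℝ) ≤ L)
    (y : Euc n) :
    ∫ t in (Ioo (-L) L)ᶜ, dlast n φ ((splitL n).symm (t, y)) = - capD n φ L y := by
  have hadd := integral_add_compl (measurableSet_Ioo (a := -L) (b := L))
    (G2_integrable_t hφ1 hφ2 y)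
  rw [ftc_Ioo hφ1 (by linarith) y, ftc_total hφ1 hφ2 hφ3 hL y] at hadd
  linarith

lemma capD_cont (hφ1 : ContDiff ℝ 1 φ) : Continuous (capD n φ L) := by
  have h : ∀ c : ℝ, Continuous fun y : Euc n => φ ((splitL n).symm (c, y)) (Fin.last n) :=
    fun c => (EuclideanSpace.proj (Fin.last n)).continuous.comp
      ((hφ1.continuous).comp ((splitL n).symm.continuous.comp (Continuous.prodMk_right c)))
  exact (h L).sub (h (-L))

lemma capD_hcs (hφ2 : HasCompactSupport φ) : HasCompactSupport (capD n φ L) := by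
  have h : ∀ c : ℝ, HasCompactSupport
      fun y : Euc n => ((fun v : Euc (n+1) => v (Fin.last n)) ∘ φ) ((splitL n).symm (c, y)) :=
    fun c => hcs_fiber (hφ2.comp_left rfl) c
  apply HasCompactSupport.of_support_subset_isCompact ((h L).union (h (-L)))
  intro y hy
  simp only [Function.mem_support] at hy
  by_contra hmem
  rw [Set.mem_union] at hmem
  push_neg at hmem
  apply hy
  have h1 := image_eq_zero_of_notMem_tsupport hmem.1
  have h2 := image_eq_zero_of_notMem_tsupport hmem.2
  rw [capD]
  change (φ ((splitL n).symm (L, y)) (Fin.last n)) - (φ ((splitL n).symm (-L, y)) (Fin.last n))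
    = 0
  rw [show φ ((splitL n).symm (L, y)) (Fin.last n)
      = ((fun v : Euc (n+1) => v (Fin.last n)) ∘ φ) ((splitL n).symm (L, y)) from rfl,
    show φ ((splitL n).symm (-L, y)) (Fin.last n)
      = ((fun v : Euc (n+1) => v (Fin.last n)) ∘ φ) ((splitL n).symm (-L, y)) from rfl,
    h1, h2, sub_zero]

lemma capD_bound (hφ4 : ∀ x, ‖φ x‖ ≤ 1) (y : Euc n) : |capD n φ L y| ≤ 2 := by
  have h : ∀ c : ℝ, |φ ((splitL n).symm (c, y)) (Fin.last n)| ≤ 1 := fun c =>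
    (abs_coord_le_norm _ _).trans (hφ4 _)
  calc |capD n φ L y| ≤ |φ ((splitL n).symm (L, y)) (Fin.last n)|
        + |φ ((splitL n).symm (-L, y)) (Fin.last n)| := abs_sub _ _
    _ ≤ 2 := by linarith [h L, h (-L)]

end Vertical

/-! ### elements of the perimeter set are bounded by the perimeter -/

lemma abs_integral_le_Per {A₀ W : Set (Euc n)}
    (hb : BddAbove {r : ℝ | ∃ φ, TestField W φ ∧ r = ∫ x in A₀, divg φ x})
    {ψ : Euc n → Euc n} (hψ : TestField W ψ) :
    |∫ x in A₀, divg ψ x| ≤ Per A₀ W := by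
  have h1 : ∫ x in A₀, divg ψ x ≤ Per A₀ W := le_csSup hb ⟨ψ, hψ, rfl⟩
  have he : ∫ x in A₀, divg (-ψ) x = -∫ x in A₀, divg ψ x := by
    simp [divg_neg, integral_neg]
  have h2 : ∫ x in A₀, divg (-ψ) x ≤ Per A₀ W := le_csSup hb ⟨-ψ, testField_neg hψ, rfl⟩
  rw [he] at h2
  exact abs_le.2 ⟨by linarith, h1⟩

/-! ### the upper bound for competitors -/

lemma upper_bound {E₀ F₀ W : Set (Euc n)}
    (hE₀b : BddAbove {r : ℝ | ∃ φ, TestField W φ ∧ r = ∫ x in E₀, divg φ x})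
    (hF₀b : BddAbove {r : ℝ | ∃ φ, TestField W φ ∧ r = ∫ x in F₀, divg φ x})
    (hfin : volume (symmDiff E₀ F₀) ≠ ⊤)
    (L : ℝ) (hL : 1 ≤ L) {ρ : ℝ}
    (hρ : ρ ∈ {r : ℝ | ∃ φ, TestField ((splitL n) ⁻¹' (Ioo (-(L+1)) (L+1) ×ˢ W)) φ ∧
      r = ∫ x in (splitL n) ⁻¹' ((Ioo (-L) L ×ˢ F₀) ∪ ((Ioo (-L) L)ᶜ ×ˢ E₀)), divg φ x}) :
    ρ ≤ 2 * L * Per F₀ W + 2 * Per E₀ W + 4 * (volume (symmDiff E₀ F₀)).toReal := by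
  obtain ⟨φ, hφT, hρeq⟩ := hρ
  obtain ⟨hφ1, hφ2, hφ3, hφ4⟩ := hφT
  set U := (Ioo (-L) L ×ˢ F₀) ∪ ((Ioo (-L) L)ᶜ ×ˢ E₀) with hU
  set H : ℝ × Euc n → ℝ := fun p => divg φ ((splitL n).symm p) with hH
  set G2 : ℝ × Euc n → ℝ := fun p => dlast n φ ((splitL n).symm p) with hG2
  set G1 : ℝ × Euc n → ℝ := fun p => divg (sliceF n φ p.1) p.2 with hG1
  have hdecomp : ∀ p : ℝ × Euc n, H p = G1 p + G2 p := fun p => divg_decomp hφ1 p.1 p.2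
  have hHint : ∀ (μ : Measure (ℝ × Euc n)), μ ≤ volume → Integrable H μ := fun μ hμ =>
    comp_symm_integrable (divg_continuous hφ1) (divg_hcs hφ2) μ hμ
  have hG2int : ∀ (μ : Measure (ℝ × Euc n)), μ ≤ volume → Integrable G2 μ := fun μ hμ =>
    comp_symm_integrable (dlast_continuous hφ1) (dlast_hcs hφ2) μ hμ
  have hG1int : ∀ (μ : Measure (ℝ × Euc n)), μ ≤ volume → Integrable G1 μ := by
    intro μ hμ
    have heq : G1 = fun p => H p - G2 p := funext fun p => by rw [hdecomp p]; ring
    rw [heq]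
    exact (hHint μ hμ).sub (hG2int μ hμ)
  set μA := (volume.restrict (Ioo (-L) L)).prod (volume.restrict F₀) with hμA
  set μB := (volume.restrict ((Ioo (-L) L)ᶜ)).prod (volume.restrict E₀) with hμB
  have hμAvol : μA = (volume : Measure (ℝ × Euc n)).restrict (Ioo (-L) L ×ˢ F₀) := by
    rw [hμA, Measure.prod_restrict, ← Measure.volume_eq_prod]
  have hμBvol : μB = (volume : Measure (ℝ × Euc n)).restrict (((Ioo (-L) L)ᶜ) ×ˢ E₀) := by
    rw [hμB, Measure.prod_restrict, ← Measure.volume_eq_prod]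
  have hμAle : μA ≤ volume := by rw [hμAvol]; exact Measure.restrict_le_self
  have hμBle : μB ≤ volume := by rw [hμBvol]; exact Measure.restrict_le_self
  have hmS : MeasurableSet ((Ioo (-L) L : Set ℝ) ×ˢ (univ : Set (Euc n))) :=
    measurableSet_Ioo.prod MeasurableSet.univ
  have hsplit : ∫ x in (splitL n) ⁻¹' U, divg φ x = ∫ p, H p ∂μA + ∫ p, H p ∂μB := by
    rw [setIntegral_split]
    have h0 := integral_add_compl hmS (hHint (volume.restrict U) Measure.restrict_le_self)
    rw [Measure.restrict_restrict hmS, Measure.restrict_restrict hmS.compl, hU,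
      inter_cyl E₀ F₀ L, compl_inter_cyl E₀ F₀ L, ← hμAvol, ← hμBvol] at h0
    exact h0.symm
  set PF := Per F₀ W with hPF
  set PE := Per E₀ W with hPE
  have hsliceT : ∀ t : ℝ, TestField W (sliceF n φ t) := fun t =>
    sliceF_testField ⟨hφ1, hφ2, hφ3, hφ4⟩ t
  have hIFbound : ∀ t : ℝ, |∫ y in F₀, divg (sliceF n φ t) y| ≤ PF := fun t =>
    abs_integral_le_Per hF₀b (hsliceT t)
  have hIEbound : ∀ t : ℝ, |∫ y in E₀, divg (sliceF n φ t) y| ≤ PE := fun t =>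
    abs_integral_le_Per hE₀b (hsliceT t)
  -- G1 bound over A
  have hG1A : ∫ p, G1 p ∂μA ≤ 2 * L * PF := by
    have hint : Integrable G1 ((volume.restrict (Ioo (-L) L)).prod (volume.restrict F₀)) := by
      rw [← hμA]; exact hG1int μA hμAle
    have heq : ∫ p, G1 p ∂μA
        = ∫ t in Ioo (-L) L, (∫ y in F₀, divg (sliceF n φ t) y) := by
      rw [hμA, integral_prod _ hint]
    rw [heq]
    have habs := norm_integral_le_integral_norm (μ := volume.restrict (Ioo (-L) L))
      (fun t => ∫ y in F₀, divg (sliceF n φ t) y)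
    simp only [Real.norm_eq_abs] at habs
    have hconst : Integrable (fun _ : ℝ => PF) (volume.restrict (Ioo (-L) L)) := by
      refine integrable_const_iff.2 (Or.inr ⟨?_⟩)
      rw [Measure.restrict_apply_univ]
      exact measure_Ioo_lt_top
    have hmono : ∫ t, |∫ y in F₀, divg (sliceF n φ t) y| ∂(volume.restrict (Ioo (-L) L))
        ≤ ∫ _t, PF ∂(volume.restrict (Ioo (-L) L)) :=
      integral_mono_of_nonneg (Eventually.of_forall fun t => abs_nonneg _) hconst
        (Eventually.of_forall fun t => hIFbound t)
    have hval : ∫ _t, PF ∂(volume.restrict (Ioo (-L) L)) = 2 * L * PF := by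
      rw [integral_const, measureReal_def, Measure.restrict_apply_univ, Real.volume_Ioo, smul_eq_mul,
        ENNReal.toReal_ofReal (by linarith)]
      ring
    calc ∫ t in Ioo (-L) L, (∫ y in F₀, divg (sliceF n φ t) y)
        ≤ |∫ t in Ioo (-L) L, (∫ y in F₀, divg (sliceF n φ t) y)| := le_abs_self _
      _ ≤ ∫ t, |∫ y in F₀, divg (sliceF n φ t) y| ∂(volume.restrict (Ioo (-L) L)) := habs
      _ ≤ ∫ _t, PF ∂(volume.restrict (Ioo (-L) L)) := hmono
      _ = 2 * L * PF := hval
  -- G1 bound over B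
  have hG1B : ∫ p, G1 p ∂μB ≤ 2 * PE := by
    have hint : Integrable G1 ((volume.restrict ((Ioo (-L) L)ᶜ)).prod (volume.restrict E₀)) := by
      rw [← hμB]; exact hG1int μB hμBle
    have heq : ∫ p, G1 p ∂μB
        = ∫ t in (Ioo (-L) L)ᶜ, (∫ y in E₀, divg (sliceF n φ t) y) := by
      rw [hμB, integral_prod _ hint]
    rw [heq]
    have hIEint : Integrable (fun t => ∫ y in E₀, divg (sliceF n φ t) y)
        (volume.restrict ((Ioo (-L) L)ᶜ)) := hint.integral_prod_left
    have hvan : ∀ t ∉ Icc (-(L+1)) (L+1), (∫ y in E₀, divg (sliceF n φ t) y) = 0 := by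
      intro t ht
      have hnot : t ∉ Ioo (-(L+1)) (L+1) := fun hc => ht (Ioo_subset_Icc_self hc)
      have hz : ∀ y : Euc n, divg (sliceF n φ t) y = 0 := by
        intro y
        rw [divg_sliceF hφ1]
        simp [fderiv_zero_outside (vanish_outer hφ3 hnot y)]
      simp only [hz]
      simp
    have hreduce : ∫ t in (Ioo (-L) L)ᶜ, (∫ y in E₀, divg (sliceF n φ t) y)
        = ∫ t, (∫ y in E₀, divg (sliceF n φ t) y)
            ∂(volume.restrict (Icc (-(L+1)) (L+1) ∩ (Ioo (-L) L)ᶜ)) :=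
      setIntegral_eq_inter measurableSet_Icc volume hIEint hvan
    rw [hreduce]
    set μC := volume.restrict (Icc (-(L+1)) (L+1) ∩ (Ioo (-L) L)ᶜ) with hμC
    set IE : ℝ → ℝ := fun t => ∫ y in E₀, divg (sliceF n φ t) y with hIEdef
    have hmeasfin : μC univ < ⊤ := by
      rw [hμC, Measure.restrict_apply_univ]
      exact lt_of_le_of_lt (measure_mono Set.inter_subset_left) measure_Icc_lt_top
    have hmeas2 : ((volume (Icc (-(L+1)) (L+1) ∩ (Ioo (-L) L)ᶜ))).toReal ≤ 2 := by
      have hsub2 : Ioo (-L) L ⊆ Icc (-(L+1)) (L+1) := fun t ht =>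
        ⟨by linarith [ht.1], by linarith [ht.2]⟩
      have hdiff : Icc (-(L+1)) (L+1) ∩ (Ioo (-L) L)ᶜ = Icc (-(L+1)) (L+1) \ Ioo (-L) L := rfl
      rw [hdiff, measure_diff hsub2 measurableSet_Ioo.nullMeasurableSet
        (by rw [Real.volume_Ioo]; exact ENNReal.ofReal_ne_top),
        Real.volume_Icc, Real.volume_Ioo,
        ← ENNReal.ofReal_sub _ (by linarith : (0:ℝ) ≤ L - -L),
        ENNReal.toReal_ofReal (by linarith)]
      linarith
    have habs : |∫ t, IE t ∂μC| ≤ ∫ t, |IE t| ∂μC := by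
      have := norm_integral_le_integral_norm (μ := μC) IE
      simpa [Real.norm_eq_abs] using this
    have hconst : Integrable (fun _ : ℝ => PE) μC :=
      integrable_const_iff.2 (Or.inr ⟨hmeasfin⟩)
    have hmono : ∫ t, |IE t| ∂μC ≤ ∫ _t, PE ∂μC :=
      integral_mono_of_nonneg (Eventually.of_forall fun t => abs_nonneg _) hconst
        (Eventually.of_forall fun t => hIEbound t)
    have hval : ∫ _t, PE ∂μC ≤ 2 * PE := by
      rw [integral_const, measureReal_def, smul_eq_mul]
      have hPE0 : 0 ≤ PE := Per_nonneg E₀ W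
      have : (μC univ).toReal ≤ 2 := by
        rw [hμC, Measure.restrict_apply_univ]
        exact hmeas2
      exact mul_le_mul_of_nonneg_right this hPE0
    calc ∫ t, IE t ∂μC ≤ |∫ t, IE t ∂μC| := le_abs_self _
      _ ≤ ∫ t, |IE t| ∂μC := habs
      _ ≤ ∫ _t, PE ∂μC := hmono
      _ ≤ 2 * PE := hval
  -- G2 over A
  have hG2A : ∫ p, G2 p ∂μA = ∫ y in F₀, capD n φ L y := by
    have hint : Integrable G2 ((volume.restrict (Ioo (-L) L)).prod (volume.restrict F₀)) := by
      rw [← hμA]; exact hG2int μA hμAle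
    rw [hμA, integral_prod _ hint, integral_integral_swap hint]
    refine integral_congr_ae (Eventually.of_forall fun y => ?_)
    exact ftc_Ioo hφ1 (by linarith) y
  -- G2 over B
  have hG2B : ∫ p, G2 p ∂μB = - ∫ y in E₀, capD n φ L y := by
    have hint : Integrable G2 ((volume.restrict ((Ioo (-L) L)ᶜ)).prod (volume.restrict E₀)) := by
      rw [← hμB]; exact hG2int μB hμBle
    rw [hμB, integral_prod _ hint, integral_integral_swap hint]
    rw [← integral_neg]
    refine integral_congr_ae (Eventually.of_forall fun y => ?_)
    exact ftc_compl hφ1 hφ2 hφ3 (by linarith) y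
  -- cap bound
  have hcap : (∫ y in F₀, capD n φ L y) - (∫ y in E₀, capD n φ L y)
      ≤ 4 * (volume (symmDiff E₀ F₀)).toReal := by
    set T := toMeasurable volume (symmDiff E₀ F₀) with hT
    have hTm : MeasurableSet T := measurableSet_toMeasurable _ _
    have hTvol : volume T = volume (symmDiff E₀ F₀) := measure_toMeasurable _
    have hΔsub : symmDiff E₀ F₀ ⊆ T := subset_toMeasurable _ _
    have hcompl : Tᶜ ∩ F₀ = Tᶜ ∩ E₀ := by
      ext y
      simp only [Set.mem_inter_iff, Set.mem_compl_iff]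
      constructor
      · rintro ⟨hyT, hyF⟩
        refine ⟨hyT, ?_⟩
        by_contra hyE
        exact hyT (hΔsub (Set.mem_symmDiff.2 (Or.inr ⟨hyF, hyE⟩)))
      · rintro ⟨hyT, hyE⟩
        refine ⟨hyT, ?_⟩
        by_contra hyF
        exact hyT (hΔsub (Set.mem_symmDiff.2 (Or.inl ⟨hyE, hyF⟩)))
    have hcapint : ∀ (μ : Measure (Euc n)), μ ≤ volume → Integrable (capD n φ L) μ := fun μ hμ =>
      ((capD_cont hφ1).integrable_of_hasCompactSupport (capD_hcs hφ2)).mono_measure hμ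
    have hsplitF := integral_add_compl hTm (hcapint (volume.restrict F₀) Measure.restrict_le_self)
    have hsplitE := integral_add_compl hTm (hcapint (volume.restrict E₀) Measure.restrict_le_self)
    have hcancel : ∫ y in Tᶜ, capD n φ L y ∂(volume.restrict F₀)
        = ∫ y in Tᶜ, capD n φ L y ∂(volume.restrict E₀) := by
      rw [Measure.restrict_restrict hTm.compl, Measure.restrict_restrict hTm.compl, hcompl]
    have hboundT : ∀ A : Set (Euc n),
        |∫ y in T, capD n φ L y ∂(volume.restrict A)|
          ≤ 2 * (volume (symmDiff E₀ F₀)).toReal := by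
      intro A
      have hmeasle : (volume.restrict A) T ≤ volume (symmDiff E₀ F₀) := by
        rw [Measure.restrict_apply hTm, ← hTvol]
        exact measure_mono Set.inter_subset_left
      have hfinA : ((volume.restrict A).restrict T) univ < ⊤ := by
        rw [Measure.restrict_apply_univ]
        exact lt_of_le_of_lt hmeasle (lt_top_iff_ne_top.2 hfin)
      have habs := norm_integral_le_integral_norm
        (μ := (volume.restrict A).restrict T) (capD n φ L)
      simp only [Real.norm_eq_abs] at habs
      have hconst2 : Integrable (fun _ : Euc n => (2:ℝ)) ((volume.restrict A).restrict T) :=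
        integrable_const_iff.2 (Or.inr ⟨hfinA⟩)
      have hmono2 : ∫ y, |capD n φ L y| ∂((volume.restrict A).restrict T)
          ≤ ∫ _y, (2:ℝ) ∂((volume.restrict A).restrict T) :=
        integral_mono_of_nonneg (Eventually.of_forall fun y => abs_nonneg _) hconst2
          (Eventually.of_forall fun y => capD_bound hφ4 y)
      have hval2 : ∫ _y, (2:ℝ) ∂((volume.restrict A).restrict T)
          ≤ 2 * (volume (symmDiff E₀ F₀)).toReal := by
        rw [integral_const, measureReal_def, Measure.restrict_apply_univ, smul_eq_mul, mul_comm]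
        exact mul_le_mul_of_nonneg_left (ENNReal.toReal_mono hfin hmeasle) (by norm_num)
      exact habs.trans (hmono2.trans hval2)
    have hdiffeq : (∫ y in F₀, capD n φ L y) - (∫ y in E₀, capD n φ L y)
        = (∫ y in T, capD n φ L y ∂(volume.restrict F₀))
          - (∫ y in T, capD n φ L y ∂(volume.restrict E₀)) := by
      rw [← hsplitF, ← hsplitE, hcancel]
      ring
    rw [hdiffeq]
    have h1 := abs_le.1 (hboundT F₀)
    have h2 := abs_le.1 (hboundT E₀)
    linarith [h1.1, h1.2, h2.1, h2.2]
  -- assemble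
  have hHA : ∫ p, H p ∂μA = ∫ p, G1 p ∂μA + ∫ p, G2 p ∂μA := by
    rw [← integral_add (hG1int μA hμAle) (hG2int μA hμAle)]
    exact integral_congr_ae (Eventually.of_forall fun p => hdecomp p)
  have hHB : ∫ p, H p ∂μB = ∫ p, G1 p ∂μB + ∫ p, G2 p ∂μB := by
    rw [← integral_add (hG1int μB hμBle) (hG2int μB hμBle)]
    exact integral_congr_ae (Eventually.of_forall fun p => hdecomp p)
  rw [hρeq, hsplit, hHA, hHB, hG2A, hG2B]
  linarith [hG1A, hG1B, hcap]


/-- Lemma on cylindrical almost minimizers.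
If `E = E₀ × ℝ ⊂ ℝ^{n+1}` has locally finite perimeter and its boundary is `C`-almost
minimizing, then the boundary of the cross-section `E₀ ⊂ ℝⁿ` is `C`-almost minimizing. -/
theorem cylindrical_almost_minimizing {n : ℕ} (C : ℝ) (hC : 0 ≤ C)
    (E : Set (EuclideanSpace ℝ (Fin (n + 1)))) (E₀ : Set (EuclideanSpace ℝ (Fin n)))
    (hE : LocallyFinitePerimeter E) (hE₀ : LocallyFinitePerimeter E₀)
    (hcyl : E = {x : EuclideanSpace ℝ (Fin (n + 1)) | WithLp.toLp 2 (fun i : Fin n => x i.castSucc) ∈ E₀})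
    (hmin : AlmostMinimizing C E) :
    AlmostMinimizing C E₀ := by
  have hEeq : E = (splitL n) ⁻¹' ((univ : Set ℝ) ×ˢ E₀) := by
    rw [hcyl]
    ext x
    constructor
    · intro hx
      exact ⟨Set.mem_univ _, hx⟩
    · intro hx
      exact hx.2
  rw [hEeq] at hE hmin
  intro W hWo hWb F₀ hKex
  obtain ⟨K, hKc, hΔK, hKW⟩ := hKex
  set v := (volume (symmDiff E₀ F₀)).toReal with hv
  have hμfin : volume (symmDiff E₀ F₀) ≠ ⊤ :=
    (lt_of_le_of_lt (measure_mono hΔK) hKc.measure_lt_top).ne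
  have hv0 : 0 ≤ v := ENNReal.toReal_nonneg
  have hE₀b : BddAbove {r : ℝ | ∃ φ, TestField W φ ∧ r = ∫ x in E₀, divg φ x} := hE₀ W hWo hWb
  have hPE0 : 0 ≤ Per E₀ W := Per_nonneg E₀ W
  have hPF0 : 0 ≤ Per F₀ W := Per_nonneg F₀ W
  have key : ∀ L : ℝ, 1 ≤ L → ∀ δ : ℝ, 0 < δ →
      2*L*(Per E₀ W - δ) ≤ 2*L*(Per F₀ W) + 2*(Per E₀ W) + 4*v + C*(2*L*v) := by
    intro L hL δ hδ
    have hL0 : (0:ℝ) < L := by linarith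
    set W' := (splitL n) ⁻¹' (Ioo (-(L+1)) (L+1) ×ˢ W) with hW'
    set U := (Ioo (-L) L ×ˢ F₀) ∪ ((Ioo (-L) L)ᶜ ×ˢ E₀) with hUdef
    set F' := (splitL n) ⁻¹' U with hF'
    have hW'o : IsOpen W' := isOpen_preSplit isOpen_Ioo hWo
    have hW'b : Bornology.IsBounded W' := isBounded_preSplit (Metric.isBounded_Ioo _ _) hWb
    have hEbW' := hE W' hW'o hW'b
    have h1 : 2*L*(Per E₀ W - δ) ≤ Per ((splitL n) ⁻¹' ((univ : Set ℝ) ×ˢ E₀)) W' :=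
      lower_bound hE₀b L δ hL hδ hEbW'
    have hsd : symmDiff ((splitL n) ⁻¹' ((univ : Set ℝ) ×ˢ E₀)) F'
        = (splitL n) ⁻¹' (Ioo (-L) L ×ˢ (symmDiff E₀ F₀)) := by
      have hcomm : ∀ A B : Set (ℝ × Euc n),
          symmDiff ((splitL n) ⁻¹' A) ((splitL n) ⁻¹' B) = (splitL n) ⁻¹' (symmDiff A B) := by
        intro A B
        ext x
        simp only [Set.mem_preimage, Set.mem_symmDiff]
      rw [hF', hcomm, hUdef, symmDiff_cyl]
    have hsdvol : (volume (symmDiff ((splitL n) ⁻¹' ((univ : Set ℝ) ×ˢ E₀)) F')).toReal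
        = 2*L*v := by
      rw [hsd, volume_preimage_split, Measure.volume_eq_prod, Measure.prod_prod,
        Real.volume_Ioo, ENNReal.toReal_mul, ENNReal.toReal_ofReal (by linarith), hv]
      ring
    have hKex' : ∃ K', IsCompact K' ∧
        symmDiff ((splitL n) ⁻¹' ((univ : Set ℝ) ×ˢ E₀)) F' ⊆ K' ∧ K' ⊆ W' := by
      refine ⟨(splitL n) ⁻¹' (Icc (-L) L ×ˢ K), isCompact_preSplit isCompact_Icc hKc, ?_, ?_⟩
      · rw [hsd]
        exact Set.preimage_mono (Set.prod_mono Ioo_subset_Icc_self hΔK)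
      · rw [hW']
        refine Set.preimage_mono (Set.prod_mono ?_ hKW)
        exact Icc_subset_Ioo (by linarith) (by linarith)
    have h2 := hmin W' hW'o hW'b F' hKex'
    have h3 : Per F' W' ≤ 2*L*(Per F₀ W) + 2*(Per E₀ W) + 4*v := by
      by_cases hFb : BddAbove {r : ℝ | ∃ φ, TestField W φ ∧ r = ∫ x in F₀, divg φ x}
      · apply Real.sSup_le
        · intro ρ hρ
          exact upper_bound hE₀b hFb hμfin L hL hρ
        · nlinarith
      · have hzero : Per F' W' = 0 :=
          Real.sSup_of_not_bddAbove (unbounded_transfer hFb L hL)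
        rw [hzero]
        nlinarith
    rw [hsdvol] at h2
    calc 2*L*(Per E₀ W - δ) ≤ Per ((splitL n) ⁻¹' ((univ : Set ℝ) ×ˢ E₀)) W' := h1
      _ ≤ Per F' W' + C*(2*L*v) := h2
      _ ≤ 2*L*(Per F₀ W) + 2*(Per E₀ W) + 4*v + C*(2*L*v) := by linarith
  have hfinal : ∀ ε : ℝ, 0 < ε → Per E₀ W ≤ Per F₀ W + C * v + ε := by
    intro ε hε
    set L := max 1 ((2*(Per E₀ W) + 4*v)/ε + 1) with hLdef
    have hL1 : 1 ≤ L := le_max_left _ _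
    have hL2 : (2*(Per E₀ W) + 4*v)/ε + 1 ≤ L := le_max_right _ _
    have hLε : 2*(Per E₀ W) + 4*v ≤ L * ε := by
      have hdiv : (2*(Per E₀ W) + 4*v)/ε ≤ L := by linarith
      exact (div_le_iff₀ hε).1 hdiv
    have hL0 : (0:ℝ) < L := by linarith
    have hkey := key L hL1 (ε/2) (by linarith)
    have h6 : 2*L*(Per E₀ W) ≤ 2*L*(Per F₀ W + C*v + ε) := by nlinarith [hkey, hLε]
    have h2L : (0:ℝ) < 2*L := by linarith
    exact (mul_le_mul_iff_right₀ h2L).1 h6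
  exact le_of_forall_pos_le_add hfinal

end
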